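/- Sharpened Jensen inequality for the square root: let X be a nonnegative real random variable with mean μ > 0 and finite variance. Then −Var[X]/(2 μ^{3/2}) ≤ E[sqrt(X)] − sqrt(μ) ≤ 0. -/

import Mathlib

open MeasureTheory ProbabilityTheory

/-- Sharpened Jensen inequality for the square root:
`−Var[X]/(2 μ^{3/2}) ≤ E[sqrt X] − sqrt μ ≤ 0` where `μ = E[X] > 0`. -/
theorem sharpened_jensen_sqrt
    {Ω : Type*} [MeasureSpace Ω] [IsProbabilityMeasure (ℙ : Measure Ω)]
    (X : Ω → ℝ) (hXnonneg : ∀ᵐ ω, 0 ≤ X ω)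
    (hXint : Integrable X) (hX2int : Integrable (fun ω => (X ω) ^ 2))
    (μ : ℝ) (hμ : μ = ∫ ω, X ω) (hμpos : 0 < μ) :
    -(variance X ℙ) / (2 * μ ^ ((3:ℝ)/2)) ≤ (∫ ω, Real.sqrt (X ω)) - Real.sqrt μ ∧
    (∫ ω, Real.sqrt (X ω)) - Real.sqrt μ ≤ 0 := by
  set m := Real.sqrt μ with hm
  have hmpos : 0 < m := Real.sqrt_pos.mpr hμpos
  have hmsq : m ^ 2 = μ := Real.sq_sqrt hμpos.le
  have h32 : μ ^ ((3:ℝ)/2) = μ * m := by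
    rw [show (3:ℝ)/2 = 1 + 1/2 by norm_num, Real.rpow_add hμpos, Real.rpow_one,
      hm, Real.sqrt_eq_rpow]
  have hmeas : AEStronglyMeasurable (fun ω => Real.sqrt (X ω)) ℙ :=
    Real.continuous_sqrt.comp_aestronglyMeasurable hXint.1
  have hsqrtint : Integrable (fun ω => Real.sqrt (X ω)) := by
    refine Integrable.mono' ((integrable_const 1).add hXint.abs) hmeas ?_
    filter_upwards [hXnonneg] with ω hω
    have h1 : Real.sqrt (X ω) ≤ 1 + X ω := by
      nlinarith [Real.sq_sqrt hω, Real.sqrt_nonneg (X ω)]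
    show ‖Real.sqrt (X ω)‖ ≤ 1 + |X ω|
    rw [Real.norm_eq_abs, abs_of_nonneg (Real.sqrt_nonneg (X ω))]
    linarith [le_abs_self (X ω)]
  have hXμint : Integrable (fun ω => (X ω - μ) / (2 * m)) :=
    (hXint.sub (integrable_const μ)).div_const _
  have hlin : Integrable (fun ω => m + (X ω - μ) / (2 * m)) :=
    (integrable_const m).add hXμint
  have hsqint : Integrable (fun ω => (X ω - μ) ^ 2) := by
    have : (fun ω => (X ω - μ) ^ 2) = fun ω => X ω ^ 2 - (2 * μ) * X ω + μ ^ 2 := by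
      funext ω; ring
    rw [this]
    exact (hX2int.sub (hXint.const_mul _)).add (integrable_const _)
  have hsqdivint : Integrable (fun ω => (X ω - μ) ^ 2 / (2 * (μ * m))) :=
    hsqint.div_const _
  have hlow : Integrable (fun ω => m + (X ω - μ) / (2 * m) - (X ω - μ) ^ 2 / (2 * (μ * m))) :=
    hlin.sub hsqdivint
  have hXmean : ∫ ω, X ω = μ := hμ.symm
  have hintlin : ∫ ω, (m + (X ω - μ) / (2 * m)) = m := by
    rw [integral_add (integrable_const m) hXμint]
    simp only [integral_div, integral_sub hXint (integrable_const μ), integral_const,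
      measure_univ, ENNReal.toReal_one, probReal_univ, one_smul, hXmean]
    ring
  have hMem : MemLp X 2 ℙ := by
    rw [memLp_two_iff_integrable_sq hXint.1]
    exact hX2int
  have hvar : variance X ℙ = ∫ ω, (X ω - μ) ^ 2 := by
    rw [variance_eq_integral hMem.1.aemeasurable]
    congr 1
    funext ω
    simp [hXmean]
  have hvarnn : 0 ≤ variance X ℙ := variance_nonneg _ _
  have hintlow : ∫ ω, (m + (X ω - μ) / (2 * m) - (X ω - μ) ^ 2 / (2 * (μ * m)))
      = m - variance X ℙ / (2 * (μ * m)) := by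
    rw [integral_sub hlin hsqdivint, hintlin, integral_div, hvar]
  have hub : ∀ᵐ ω, Real.sqrt (X ω) ≤ m + (X ω - μ) / (2 * m) := by
    filter_upwards [hXnonneg] with ω hω
    have hs := Real.sq_sqrt hω
    have hsn := Real.sqrt_nonneg (X ω)
    rw [← sub_le_iff_le_add', le_div_iff₀ (by positivity)]
    nlinarith [sq_nonneg (Real.sqrt (X ω) - m)]
  have hlb : ∀ᵐ ω, m + (X ω - μ) / (2 * m) - (X ω - μ) ^ 2 / (2 * (μ * m)) ≤ Real.sqrt (X ω) := by
    filter_upwards [hXnonneg] with ω hω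
    have hs := Real.sq_sqrt hω
    have hsn := Real.sqrt_nonneg (X ω)
    have hLHS : m + (X ω - μ) / (2 * m) - (X ω - μ) ^ 2 / (2 * (μ * m))
        = (2 * μ ^ 2 + μ * (X ω - μ) - (X ω - μ) ^ 2) / (2 * (μ * m)) := by
      rw [← hmsq]
      field_simp
    rw [hLHS, div_le_iff₀ (by positivity)]
    have key : 0 ≤ (Real.sqrt (X ω) - m) ^ 2 *
        (Real.sqrt (X ω) ^ 2 + 2 * Real.sqrt (X ω) * m) := by positivity
    nlinarith [key, hs, hmsq]
  constructor
  · have hI := integral_mono_ae hlow hsqrtint hlb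
    rw [hintlow] at hI
    rw [h32]
    have h2 : -(variance X ℙ) / (2 * (μ * m)) = -(variance X ℙ / (2 * (μ * m))) := by ring
    linarith
  · have hI := integral_mono_ae hsqrtint hlin hub
    rw [hintlin] at hI
    linarith
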